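/- Fix α > 0. Then ϑ_{α,λ} tends to 0 as λ tends to −1/2 from the right: lim_{λ → (−1/2)^+} ϑ_{α,λ} = 0. -/

import Mathlib

/-- The constant `ϑ_{α,λ}`. -/
noncomputable def vartheta (a lam : ℝ) : ℝ :=
  (1 / (4 * Real.pi)) * Real.exp (a + 1) * a ^ (-(1 : ℝ)/2 - a) *
    (1 + 2*lam) ^ (-(1 : ℝ)/2 - 2*lam) * (1 + 1 / (1620 * (1 + lam)^5)) *
    ((1 + lam) * (1 / Real.sinh (1/(1 + 2*lam))) / (1 + 2*lam)) ^ ((1 : ℝ)/2 + lam) *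
    (a * Real.sinh (1/a)) ^ (-(a/2)) *
    ((1 + lam) * Real.sinh (1/(1 + lam))) ^ ((1 + lam)/2)

theorem stmt9 (α : ℝ) (hα : 0 < α) :
    Filter.Tendsto (fun lam : ℝ => vartheta α lam)
      (nhdsWithin (-(1 : ℝ)/2) (Set.Ioi (-(1 : ℝ)/2))) (nhds 0) := by
  set l := nhdsWithin (-(1 : ℝ)/2) (Set.Ioi (-(1 : ℝ)/2)) with hl
  set g : ℝ → ℝ := fun lam =>
    (1 / (4 * Real.pi)) * Real.exp (α + 1) * α ^ (-(1 : ℝ)/2 - α) *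
      (1 + 2*lam) ^ (-(1 : ℝ)/2 - 2*lam) * (1 + 1 / (1620 * (1 + lam)^5)) *
      1 * (α * Real.sinh (1/α)) ^ (-(α/2)) *
      ((1 + lam) * Real.sinh (1/(1 + lam))) ^ ((1 + lam)/2) with hgdef
  -- limit of the base/exponent pair for the vanishing factor
  have hA : Filter.Tendsto (fun lam : ℝ => (1 + 2*lam) ^ (-(1 : ℝ)/2 - 2*lam)) l (nhds 0) := by
    have hpair : Filter.Tendsto (fun lam : ℝ => ((1 + 2*lam, -(1 : ℝ)/2 - 2*lam) : ℝ × ℝ)) l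
        (nhds ((0 : ℝ), (1/2 : ℝ))) := by
      apply Filter.Tendsto.mono_left _ nhdsWithin_le_nhds
      have hc : ContinuousAt (fun lam : ℝ => ((1 + 2*lam, -(1 : ℝ)/2 - 2*lam) : ℝ × ℝ))
          (-(1 : ℝ)/2) := by fun_prop
      have := hc.tendsto
      norm_num at this
      convert this using 2 <;> norm_num
    have hc := Real.continuousAt_rpow ((0 : ℝ), (1/2 : ℝ)) (Or.inr (by norm_num))
    have := hc.tendsto.comp hpair
    simpa [Function.comp_def, Real.zero_rpow] using this
  have hB : Filter.Tendsto (fun lam : ℝ => 1 + 1 / (1620 * (1 + lam)^5)) l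
      (nhds (1 + 1 / (1620 * (1 + (-(1:ℝ)/2))^5))) := by
    apply Filter.Tendsto.mono_left _ nhdsWithin_le_nhds
    apply ContinuousAt.tendsto
    apply ContinuousAt.add continuousAt_const
    exact ContinuousAt.div continuousAt_const (by fun_prop) (by norm_num)
  have hE : Filter.Tendsto (fun lam : ℝ => ((1 + lam) * Real.sinh (1/(1 + lam))) ^ ((1 + lam)/2))
      l (nhds (((1 + (-(1:ℝ)/2)) * Real.sinh (1/(1 + (-(1:ℝ)/2)))) ^ ((1 + (-(1:ℝ)/2))/2))) := by
    apply Filter.Tendsto.mono_left _ nhdsWithin_le_nhds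
    apply ContinuousAt.tendsto
    apply ContinuousAt.rpow _ (by fun_prop)
    · left
      have : (0:ℝ) < Real.sinh (1/(1 + (-(1:ℝ)/2))) := Real.sinh_pos_iff.2 (by norm_num)
      positivity
    · apply ContinuousAt.mul (by fun_prop)
      apply Real.continuous_sinh.continuousAt.comp
      exact ContinuousAt.div continuousAt_const (by fun_prop) (by norm_num)
  have hg0 : Filter.Tendsto g l (nhds 0) := by
    have hc1 : Filter.Tendsto
        (fun _ : ℝ => (1 / (4 * Real.pi)) * Real.exp (α + 1) * α ^ (-(1 : ℝ)/2 - α)) l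
        (nhds ((1 / (4 * Real.pi)) * Real.exp (α + 1) * α ^ (-(1 : ℝ)/2 - α))) :=
      tendsto_const_nhds
    have hone : Filter.Tendsto (fun _ : ℝ => (1:ℝ)) l (nhds 1) := tendsto_const_nhds
    have hD : Filter.Tendsto (fun _ : ℝ => (α * Real.sinh (1/α)) ^ (-(α/2))) l
        (nhds ((α * Real.sinh (1/α)) ^ (-(α/2)))) := tendsto_const_nhds
    have h2 := ((((hc1.mul hA).mul hB).mul hone).mul hD).mul hE
    rw [hgdef]
    convert h2 using 2
    ring
  have hev : ∀ᶠ lam in l, lam ∈ Set.Ioo (-(1:ℝ)/2) 0 := by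
    rw [hl]
    exact Filter.eventually_iff_exists_mem.2 ⟨Set.Ioo (-(1:ℝ)/2) 0,
      Ioo_mem_nhdsGT_of_mem ⟨le_refl _, by norm_num⟩, fun x hx => hx⟩
  have key : ∀ lam ∈ Set.Ioo (-(1:ℝ)/2) 0,
      0 ≤ vartheta α lam ∧ vartheta α lam ≤ g lam := by
    intro lam hlam
    obtain ⟨hlo, hhi⟩ := hlam
    have ht : (0:ℝ) < 1 + 2*lam := by linarith
    have h1l : (0:ℝ) < 1 + lam := by linarith
    have hsinh : (0:ℝ) < Real.sinh (1/(1 + 2*lam)) := Real.sinh_pos_iff.2 (by positivity)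
    have hsinh2 : (0:ℝ) < Real.sinh (1/(1 + lam)) := Real.sinh_pos_iff.2 (by positivity)
    have hsinha : (0:ℝ) < Real.sinh (1/α) := Real.sinh_pos_iff.2 (by positivity)
    have hCbase : (0:ℝ) ≤ (1 + lam) * (1 / Real.sinh (1/(1 + 2*lam))) / (1 + 2*lam) := by
      positivity
    have hCle : (1 + lam) * (1 / Real.sinh (1/(1 + 2*lam))) / (1 + 2*lam) ≤ 1 := by
      rw [div_le_one ht, mul_one_div, div_le_iff₀ hsinh]
      have hs : 1/(1 + 2*lam) < Real.sinh (1/(1 + 2*lam)) :=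
        Real.self_lt_sinh_iff.2 (by positivity)
      have : (1:ℝ) < (1 + 2*lam) * Real.sinh (1/(1 + 2*lam)) := by
        calc (1:ℝ) = (1 + 2*lam) * (1/(1 + 2*lam)) := by field_simp
        _ < (1 + 2*lam) * Real.sinh (1/(1 + 2*lam)) := by
            exact mul_lt_mul_of_pos_left hs ht
      linarith
    have hC1 : ((1 + lam) * (1 / Real.sinh (1/(1 + 2*lam))) / (1 + 2*lam))
        ^ ((1:ℝ)/2 + lam) ≤ 1 :=
      Real.rpow_le_one hCbase hCle (by linarith)
    have hC0 : (0:ℝ) ≤ ((1 + lam) * (1 / Real.sinh (1/(1 + 2*lam))) / (1 + 2*lam))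
        ^ ((1:ℝ)/2 + lam) := Real.rpow_nonneg hCbase _
    have hπ : (0:ℝ) < Real.pi := Real.pi_pos
    constructor
    · unfold vartheta
      positivity
    · unfold vartheta
      simp only [hgdef]
      gcongr
  refine squeeze_zero' (hev.mono fun lam h => (key lam h).1)
    (hev.mono fun lam h => (key lam h).2) hg0
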